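/- Let $u_0 : \mathbb{R}^n \to \mathbb{R}$ be bounded and uniformly continuous. Then $\lim_{t \to 0^+} \sup_{0 < s \leq t} \sup_{x \in \mathbb{R}^n} \sqrt{s}\,|\nabla (e^{s\Delta} u_0)(x)| = 0$. -/

import Mathlib

open MeasureTheory

noncomputable def heatKernel (n : ℕ) (t : ℝ) (x : EuclideanSpace ℝ (Fin n)) : ℝ :=
  (4 * Real.pi * t) ^ (-(n : ℝ) / 2) * Real.exp (-‖x‖ ^ 2 / (4 * t))

noncomputable def heatExt (n : ℕ) (u0 : EuclideanSpace ℝ (Fin n) → ℝ) (t : ℝ)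
    (x : EuclideanSpace ℝ (Fin n)) : ℝ :=
  ∫ y, heatKernel n t (x - y) * u0 y

namespace HeatProof

noncomputable def gradKernel (n : ℕ) (s : ℝ) (z : EuclideanSpace ℝ (Fin n)) :
    EuclideanSpace ℝ (Fin n) →L[ℝ] ℝ :=
  (-(1 / (2 * s)) * heatKernel n s z) • (innerSL ℝ z)

variable {n : ℕ} {s : ℝ}

lemma heatKernel_pos (hs : 0 < s) (z : EuclideanSpace ℝ (Fin n)) : 0 < heatKernel n s z := by
  unfold heatKernel
  have := Real.pi_pos
  positivity

lemma heatKernel_neg (z : EuclideanSpace ℝ (Fin n)) : heatKernel n s (-z) = heatKernel n s z := by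
  simp [heatKernel]

lemma gradKernel_neg (z : EuclideanSpace ℝ (Fin n)) :
    gradKernel n s (-z) = -gradKernel n s z := by
  simp only [gradKernel, heatKernel_neg, map_neg, smul_neg, neg_smul, neg_neg]

lemma norm_gradKernel (hs : 0 < s) (z : EuclideanSpace ℝ (Fin n)) :
    ‖gradKernel n s z‖ = 1 / (2 * s) * heatKernel n s z * ‖z‖ := by
  rw [gradKernel, norm_smul (-(1 / (2 * s)) * heatKernel n s z) ((innerSL ℝ) z),
    innerSL_apply_norm, Real.norm_eq_abs, abs_mul, abs_neg,
    abs_of_nonneg (by positivity : (0:ℝ) ≤ 1 / (2 * s)),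
    abs_of_nonneg (heatKernel_pos hs z).le]

lemma continuous_heatKernel : Continuous (fun z : EuclideanSpace ℝ (Fin n) => heatKernel n s z) := by
  unfold heatKernel
  fun_prop

lemma continuous_gradKernel :
    Continuous (fun z : EuclideanSpace ℝ (Fin n) => gradKernel n s z) := by
  unfold gradKernel
  exact (continuous_const.mul continuous_heatKernel).smul (innerSL ℝ).continuous

lemma hasFDerivAt_heatKernel (hs : 0 < s) (z : EuclideanSpace ℝ (Fin n)) :
    HasFDerivAt (heatKernel n s) (gradKernel n s z) z := by
  have h1 : HasFDerivAt (fun w : EuclideanSpace ℝ (Fin n) => ‖w‖ ^ 2)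
      ((2:ℕ) • innerSL ℝ z) z := (hasStrictFDerivAt_norm_sq z).hasFDerivAt
  have h3 : HasDerivAt (fun u : ℝ => -u / (4 * s)) (-(1 / (4 * s))) (‖z‖ ^ 2) := by
    simpa [neg_div] using ((hasDerivAt_id (‖z‖ ^ 2)).neg.div_const (4 * s))
  have h2 : HasDerivAt
      (fun u : ℝ => (4 * Real.pi * s) ^ (-(n : ℝ) / 2) * Real.exp (-u / (4 * s)))
      ((4 * Real.pi * s) ^ (-(n : ℝ) / 2) *
        (Real.exp (-‖z‖ ^ 2 / (4 * s)) * -(1 / (4 * s)))) (‖z‖ ^ 2) :=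
    (h3.exp).const_mul _
  have h4 := h2.comp_hasFDerivAt z h1
  have key : gradKernel n s z = ((4 * Real.pi * s) ^ (-(n : ℝ) / 2) *
      (Real.exp (-‖z‖ ^ 2 / (4 * s)) * -(1 / (4 * s)))) • (2:ℕ) • innerSL ℝ z := by
    ext v
    simp only [gradKernel, ContinuousLinearMap.smul_apply, innerSL_apply_apply, smul_eq_mul,
      heatKernel, ContinuousLinearMap.coe_smul', Pi.smul_apply, nsmul_eq_mul]
    push_cast
    ring
  rw [key]
  exact h4

lemma hasFDerivAt_heatKernel_sub (hs : 0 < s) (x y : EuclideanSpace ℝ (Fin n)) :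
    HasFDerivAt (fun x => heatKernel n s (x - y)) (gradKernel n s (x - y)) x := by
  have := (hasFDerivAt_heatKernel hs (x - y)).comp x ((hasFDerivAt_id x).sub_const y)
  exact this


lemma gauss_integrable {c : ℝ} (hc : 0 < c) :
    Integrable (fun z : EuclideanSpace ℝ (Fin n) => Real.exp (-‖z‖ ^ 2 / c)) := by
  have hb : (0:ℝ) < 1 / c := by positivity
  have h := GaussianFourier.integrable_cexp_neg_mul_sq_norm_add (V := EuclideanSpace ℝ (Fin n))
    (b := ((1 / c : ℝ) : ℂ)) (by simpa using hb) 0 0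
  simp only [zero_mul, add_zero] at h
  have h2 := h.re
  refine h2.congr (Filter.Eventually.of_forall fun z => ?_)
  have : (-(((1:ℝ)/c : ℝ) : ℂ) * (‖z‖:ℂ) ^ 2) = ((-(1/c) * ‖z‖^2 : ℝ) : ℂ) := by push_cast; ring
  simp only [this, ← Complex.ofReal_exp]
  rw [show RCLike.re (((Real.exp (-(1/c) * ‖z‖^2) : ℝ)) : ℂ) = Real.exp (-(1/c) * ‖z‖^2) from Complex.ofReal_re _]
  congr 1
  field_simp

lemma gauss_integral {c : ℝ} (hc : 0 < c) :
    ∫ z : EuclideanSpace ℝ (Fin n), Real.exp (-‖z‖ ^ 2 / c) = (Real.pi * c) ^ ((n:ℝ) / 2) := by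
  have h := GaussianFourier.integral_rexp_neg_mul_sq_norm (V := EuclideanSpace ℝ (Fin n))
    (b := 1 / c) (by positivity)
  rw [finrank_euclideanSpace_fin] at h
  calc ∫ z : EuclideanSpace ℝ (Fin n), Real.exp (-‖z‖ ^ 2 / c)
      = ∫ z : EuclideanSpace ℝ (Fin n), Real.exp (-(1/c) * ‖z‖ ^ 2) := by
        congr 1; funext z; congr 1; field_simp
    _ = (Real.pi / (1 / c)) ^ ((n:ℝ) / 2) := h
    _ = (Real.pi * c) ^ ((n:ℝ) / 2) := by rw [div_div_eq_mul_div, div_one]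

lemma key_bound (hs : 0 < s) {a : ℝ} (ha : 0 ≤ a) :
    a * Real.exp (-a ^ 2 / (4 * s)) ≤ 2 * Real.sqrt s * Real.exp (-a ^ 2 / (8 * s)) := by
  set t := Real.sqrt s with hts
  have ht : 0 < t := Real.sqrt_pos.2 hs
  have ht2 : t ^ 2 = s := Real.sq_sqrt hs.le
  have hx : a ^ 2 / (8 * s) + 1 ≤ Real.exp (a ^ 2 / (8 * s)) := Real.add_one_le_exp _
  have h8 : (0:ℝ) < 8 * s := by positivity
  have hsum : a ^ 2 + 8 * s ≤ 8 * s * Real.exp (a ^ 2 / (8 * s)) := by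
    have := mul_le_mul_of_nonneg_left hx h8.le
    rw [mul_add, mul_one, mul_div_cancel₀ _ h8.ne'] at this
    linarith
  have h1 : a ≤ 2 * t * Real.exp (a ^ 2 / (8 * s)) := by
    have hq : a * (8 * s) ≤ 2 * t * (a ^ 2 + 8 * s) := by
      nlinarith [sq_nonneg (a - 2 * t), mul_nonneg ht.le (sq_nonneg (a - 2 * t)), sq_nonneg t]
    have hq2 : 2 * t * (a ^ 2 + 8 * s) ≤ 2 * t * (8 * s * Real.exp (a ^ 2 / (8 * s))) :=
      mul_le_mul_of_nonneg_left hsum (by positivity)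
    have := hq.trans hq2
    nlinarith [h8]
  calc a * Real.exp (-a ^ 2 / (4 * s))
      ≤ 2 * t * Real.exp (a ^ 2 / (8 * s)) * Real.exp (-a ^ 2 / (4 * s)) :=
        mul_le_mul_of_nonneg_right h1 (Real.exp_pos _).le
    _ = 2 * t * Real.exp (-a ^ 2 / (8 * s)) := by
        rw [mul_assoc, ← Real.exp_add]
        congr 2
        field_simp
        ring


lemma norm_gradKernel_le (hs : 0 < s) (z : EuclideanSpace ℝ (Fin n)) :
    ‖gradKernel n s z‖ ≤
      (4 * Real.pi * s) ^ (-(n : ℝ) / 2) / Real.sqrt s * Real.exp (-‖z‖ ^ 2 / (8 * s)) := by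
  set c := (4 * Real.pi * s) ^ (-(n : ℝ) / 2) with hc
  have hcpos : 0 < c := by
    have := Real.pi_pos
    positivity
  have ht : 0 < Real.sqrt s := Real.sqrt_pos.2 hs
  have ht2 : Real.sqrt s * Real.sqrt s = s := Real.mul_self_sqrt hs.le
  have hkey := key_bound hs (norm_nonneg z)
  calc ‖gradKernel n s z‖ = c / (2 * s) * (‖z‖ * Real.exp (-‖z‖ ^ 2 / (4 * s))) := by
        rw [norm_gradKernel hs, heatKernel]; ring
    _ ≤ c / (2 * s) * (2 * Real.sqrt s * Real.exp (-‖z‖ ^ 2 / (8 * s))) :=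
        mul_le_mul_of_nonneg_left hkey (by positivity)
    _ = c / Real.sqrt s * Real.exp (-‖z‖ ^ 2 / (8 * s)) := by
        rw [div_mul_eq_mul_div, div_mul_eq_mul_div, div_eq_div_iff (by positivity) ht.ne']
        linear_combination (2 * c * Real.exp (-‖z‖ ^ 2 / (8 * s))) * ht2

/-- Shifted-center bound used for the local Lipschitz estimate. -/
lemma exp_shift_bound (hs : 0 < s) {x x₀ y : EuclideanSpace ℝ (Fin n)}
    (hx : ‖x - x₀‖ ≤ Real.sqrt s) :
    Real.exp (-‖x - y‖ ^ 2 / (8 * s)) ≤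
      Real.exp 1 * Real.exp (-‖x₀ - y‖ ^ 2 / (16 * s)) := by
  set t := Real.sqrt s with hts
  have ht : 0 < t := Real.sqrt_pos.2 hs
  have ht2 : t ^ 2 = s := Real.sq_sqrt hs.le
  set b := ‖x₀ - y‖ with hbd
  set q := ‖x - y‖ with hq
  have hb0 : 0 ≤ b := norm_nonneg _
  have hq0 : 0 ≤ q := norm_nonneg _
  have htri : b ≤ t + q := by
    calc b = ‖(x₀ - x) + (x - y)‖ := by rw [hbd]; congr 1; abel
      _ ≤ ‖x₀ - x‖ + ‖x - y‖ := norm_add_le _ _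
      _ ≤ t + q := by rw [norm_sub_rev]; exact add_le_add_left hx _
  have hA : b ^ 2 - 2 * t * b ≤ q ^ 2 := by
    rcases le_or_gt b t with h | h
    · nlinarith
    · nlinarith
  rw [← Real.exp_add, Real.exp_le_exp]
  have heq : 1 + -b ^ 2 / (16 * s) - (2 * t * b - b ^ 2) / (8 * s)
      = (16 * s - 4 * t * b + b ^ 2) / (16 * s) := by
    field_simp
    ring
  have h2 : (2 * t * b - b ^ 2) / (8 * s) ≤ 1 + -b ^ 2 / (16 * s) := by
    rw [← sub_nonneg, heq]
    apply div_nonneg _ (by positivity)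
    nlinarith [sq_nonneg (b - 2 * t), sq_nonneg t]
  have h1 : -q ^ 2 / (8 * s) ≤ (2 * t * b - b ^ 2) / (8 * s) :=
    (div_le_div_iff_of_pos_right (by positivity)).mpr (by linarith)
  exact h1.trans h2

/-- Tail bound: on `‖z‖ ≥ r` we can extract `exp (-r²/(16 s))`. -/
lemma exp_tail_bound (hs : 0 < s) {r : ℝ} (hr : 0 ≤ r) {a : ℝ} (ha : r ≤ a) :
    Real.exp (-a ^ 2 / (8 * s)) ≤
      Real.exp (-r ^ 2 / (16 * s)) * Real.exp (-a ^ 2 / (16 * s)) := by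
  rw [← Real.exp_add, Real.exp_le_exp]
  have h16 : (0:ℝ) < 16 * s := by positivity
  have ha2 : r ^ 2 ≤ a ^ 2 := by nlinarith
  have : -a ^ 2 / (8 * s) = -a ^ 2 / (16 * s) + -a ^ 2 / (16 * s) := by
    field_simp; ring
  rw [this]
  exact add_le_add ((div_le_div_iff_of_pos_right h16).mpr (by linarith)) le_rfl

lemma integrable_comp_sub {F : Type*} [NormedAddCommGroup F]
    {f : EuclideanSpace ℝ (Fin n) → F} (hf : Integrable f) (x : EuclideanSpace ℝ (Fin n)) :
    Integrable fun y => f (x - y) := by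
  have h1 := (hf.comp_add_left x).comp_neg
  simpa [sub_eq_add_neg] using h1

lemma integral_comp_sub {F : Type*} [NormedAddCommGroup F] [NormedSpace ℝ F]
    (f : EuclideanSpace ℝ (Fin n) → F) (x : EuclideanSpace ℝ (Fin n)) :
    ∫ y, f (x - y) = ∫ y, f y := by
  simp_rw [sub_eq_add_neg]
  calc ∫ y, f (x + -y) = ∫ y, f (x + y) := integral_neg_eq_self (fun y => f (x + y)) volume
    _ = ∫ y, f y := integral_add_left_eq_self (fun y => f y) x

lemma integrable_gradKernel (hs : 0 < s) :
    Integrable (fun z : EuclideanSpace ℝ (Fin n) => gradKernel n s z) := by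
  have h8 : (0:ℝ) < 8 * s := by positivity
  refine Integrable.mono' (((gauss_integrable h8).const_mul
    ((4 * Real.pi * s) ^ (-(n : ℝ) / 2) / Real.sqrt s))) ?_ ?_
  · exact continuous_gradKernel.aestronglyMeasurable
  · exact Filter.Eventually.of_forall fun z => norm_gradKernel_le hs z

lemma integrable_norm_gradKernel (hs : 0 < s) :
    Integrable (fun z : EuclideanSpace ℝ (Fin n) => ‖gradKernel n s z‖) :=
  (integrable_gradKernel hs).norm

lemma integral_gradKernel_zero (hs : 0 < s) (x : EuclideanSpace ℝ (Fin n)) :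
    ∫ y, gradKernel n s (x - y) = 0 := by
  rw [integral_comp_sub (gradKernel n s) x]
  have h := integral_neg_eq_self (gradKernel n s) volume
  simp_rw [gradKernel_neg, integral_neg] at h
  have h' : (∫ z, gradKernel n s z) + (∫ z, gradKernel n s z) = 0 :=
    neg_eq_iff_add_eq_zero.mp h
  have h2 : (2:ℝ) • (∫ z, gradKernel n s z) = 0 := by rw [two_smul]; exact h'
  rcases smul_eq_zero.mp h2 with h3 | h3
  · norm_num at h3
  · exact h3

lemma const_mul_rpow (hs : 0 < s) {k : ℝ} (hk : 0 < k) :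
    (4 * Real.pi * s) ^ (-(n : ℝ) / 2) * (Real.pi * (k * s)) ^ ((n : ℝ) / 2)
      = (k / 4) ^ ((n : ℝ) / 2) := by
  have hpi := Real.pi_pos
  calc (4 * Real.pi * s) ^ (-(n : ℝ) / 2) * (Real.pi * (k * s)) ^ ((n : ℝ) / 2)
      = (Real.pi * (k * s)) ^ ((n : ℝ) / 2) / (4 * Real.pi * s) ^ ((n : ℝ) / 2) := by
        rw [neg_div, Real.rpow_neg (by positivity)]; ring
    _ = ((Real.pi * (k * s)) / (4 * Real.pi * s)) ^ ((n : ℝ) / 2) :=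
        (Real.div_rpow (by positivity) (by positivity) _).symm
    _ = (k / 4) ^ ((n : ℝ) / 2) := by
        congr 1
        field_simp

variable {u0 : EuclideanSpace ℝ (Fin n) → ℝ} {M : ℝ}

lemma heatExt_hasFDerivAt (hs : 0 < s) (hb : ∀ y, |u0 y| ≤ M) (hcont : Continuous u0)
    (x₀ : EuclideanSpace ℝ (Fin n)) :
    Integrable (fun y => u0 y • gradKernel n s (x₀ - y)) ∧
    HasFDerivAt (heatExt n u0 s) (∫ y, u0 y • gradKernel n s (x₀ - y)) x₀ := by
  have hM0 : 0 ≤ M := le_trans (abs_nonneg _) (hb 0)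
  have hpi := Real.pi_pos
  set c := (4 * Real.pi * s) ^ (-(n : ℝ) / 2) with hcdef
  have hcpos : 0 < c := by positivity
  have ht : 0 < Real.sqrt s := Real.sqrt_pos.2 hs
  have h4 : (0:ℝ) < 4 * s := by positivity
  have h16 : (0:ℝ) < 16 * s := by positivity
  have hKint : Integrable (fun z : EuclideanSpace ℝ (Fin n) => heatKernel n s z) := by
    simpa [heatKernel, hcdef] using (gauss_integrable (n := n) h4).const_mul c
  have A := hasFDerivAt_integral_of_dominated_loc_of_lip' (μ := volume)
    (F := fun x y => heatKernel n s (x - y) * u0 y)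
    (F' := fun y => u0 y • gradKernel n s (x₀ - y))
    (x₀ := x₀)
    (bound := fun y => M * (c / Real.sqrt s * Real.exp 1) * Real.exp (-‖x₀ - y‖ ^ 2 / (16 * s)))
    (s := Metric.ball x₀ (Real.sqrt s)) (Metric.ball_mem_nhds x₀ ht)
    (fun x _ => (((continuous_heatKernel.comp (continuous_const.sub continuous_id)).mul
        hcont).aestronglyMeasurable))
    (by
      refine Integrable.mono' ((integrable_comp_sub hKint x₀).mul_const M)
        (((continuous_heatKernel.comp (continuous_const.sub continuous_id)).mul
          hcont).aestronglyMeasurable) ?_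
      refine Filter.Eventually.of_forall fun y => ?_
      rw [Real.norm_eq_abs, abs_mul, abs_of_nonneg (heatKernel_pos hs _).le]
      exact mul_le_mul_of_nonneg_left (hb y) (heatKernel_pos hs _).le)
    ((hcont.smul (continuous_gradKernel.comp (continuous_const.sub continuous_id))
      ).aestronglyMeasurable)
    (by
      refine Filter.Eventually.of_forall fun y => ?_
      intro x hx
      refine Convex.norm_image_sub_le_of_norm_hasFDerivWithin_le
        (f := fun x => heatKernel n s (x - y) * u0 y)
        (C := M * (c / Real.sqrt s * Real.exp 1) * Real.exp (-‖x₀ - y‖ ^ 2 / (16 * s)))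
        (f' := fun x => u0 y • gradKernel n s (x - y))
        (s := Metric.ball x₀ (Real.sqrt s))
        (fun x _ => ((hasFDerivAt_heatKernel_sub hs x y).mul_const (u0 y)).hasFDerivWithinAt)
        (fun x' hx' => ?_) (convex_ball _ _) (Metric.mem_ball_self ht) hx
      · rw [norm_smul, Real.norm_eq_abs]
        have h1 : ‖gradKernel n s (x' - y)‖ ≤ c / Real.sqrt s * Real.exp (-‖x' - y‖ ^ 2 / (8 * s)) :=
          norm_gradKernel_le hs _
        have h2 : Real.exp (-‖x' - y‖ ^ 2 / (8 * s)) ≤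
            Real.exp 1 * Real.exp (-‖x₀ - y‖ ^ 2 / (16 * s)) := by
          apply exp_shift_bound hs
          rw [Metric.mem_ball, dist_eq_norm] at hx'
          exact hx'.le
        calc |u0 y| * ‖gradKernel n s (x' - y)‖
            ≤ M * (c / Real.sqrt s * (Real.exp 1 * Real.exp (-‖x₀ - y‖ ^ 2 / (16 * s)))) := by
              apply mul_le_mul (hb y) (h1.trans ?_) (norm_nonneg _) hM0
              exact mul_le_mul_of_nonneg_left h2 (by positivity)
          _ = M * (c / Real.sqrt s * Real.exp 1) * Real.exp (-‖x₀ - y‖ ^ 2 / (16 * s)) := by ring)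
    (((integrable_comp_sub (gauss_integrable h16) x₀).const_mul _))
    (Filter.Eventually.of_forall fun y =>
      (hasFDerivAt_heatKernel_sub hs x₀ y).mul_const (u0 y))
  exact A

end HeatProof

open HeatProof in
set_option maxHeartbeats 1000000 in
/-- For bounded, uniformly continuous `u₀`, the weighted gradient of the heat
extension vanishes uniformly as `t → 0⁺`:
`lim_{t→0⁺} sup_{0<s≤t} sup_x √s |∇(e^{sΔ}u₀)(x)| = 0`. -/
theorem sqrt_mul_norm_fderiv_heatExt_tendsto_zero (n : ℕ)
    (u0 : EuclideanSpace ℝ (Fin n) → ℝ) (M : ℝ)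
    (hb : ∀ y, |u0 y| ≤ M) (hu0 : UniformContinuous u0) :
    ∀ ε > 0, ∃ δ > 0, ∀ s : ℝ, 0 < s → s ≤ δ →
      ∀ x, Real.sqrt s * ‖fderiv ℝ (fun z => heatExt n u0 s z) x‖ ≤ ε := by
  intro ε hε
  have hM0 : 0 ≤ M := le_trans (abs_nonneg _) (hb 0)
  have hpi := Real.pi_pos
  set T := (2:ℝ) ^ ((n:ℝ) / 2) with hT
  have hTpos : 0 < T := Real.rpow_pos_of_pos two_pos _
  set C4 := (4:ℝ) ^ ((n:ℝ) / 2) with hC4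
  have hC4pos : 0 < C4 := Real.rpow_pos_of_pos four_pos _
  set ε' := ε / (2 * T) with hε'def
  have hε' : 0 < ε' := by positivity
  obtain ⟨δ₀, hδ₀, hmod⟩ := Metric.uniformContinuous_iff.mp hu0 ε' hε'
  set r := δ₀ / 2 with hrdef
  have hr : 0 < r := by positivity
  set C := 2 * M * C4 with hCdef
  have hC0 : 0 ≤ C := by positivity
  refine ⟨ε * r ^ 2 / (32 * (C + 1)), by positivity, fun s hs hsδ x => ?_⟩
  have ht : 0 < Real.sqrt s := Real.sqrt_pos.2 hs
  have h8 : (0:ℝ) < 8 * s := by positivity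
  have h16 : (0:ℝ) < 16 * s := by positivity
  set c := (4 * Real.pi * s) ^ (-(n : ℝ) / 2) with hcdef
  have hcpos : 0 < c := by positivity
  obtain ⟨hint, hder⟩ := heatExt_hasFDerivAt hs hb hu0.continuous x
  have hfd : fderiv ℝ (fun z => heatExt n u0 s z) x
      = ∫ y, u0 y • gradKernel n s (x - y) := hder.fderiv
  rw [hfd]
  have hgint : Integrable (fun y => gradKernel n s (x - y)) :=
    integrable_comp_sub (integrable_gradKernel hs) x
  have hsub : (∫ y, u0 y • gradKernel n s (x - y))
      = ∫ y, (u0 y - u0 x) • gradKernel n s (x - y) := by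
    have heq : ∀ y, (u0 y - u0 x) • gradKernel n s (x - y)
        = u0 y • gradKernel n s (x - y) - u0 x • gradKernel n s (x - y) :=
      fun y => ContinuousLinearMap.ext fun v => by
          simp only [ContinuousLinearMap.sub_apply, ContinuousLinearMap.smul_apply, smul_eq_mul,
            sub_mul]
    have h2 : Integrable (fun y => u0 x • gradKernel n s (x - y)) volume := by
      exact hgint.smul (u0 x)
    rw [funext heq, integral_sub hint h2, integral_smul,
      integral_gradKernel_zero hs x, smul_zero, sub_zero]
  rw [hsub]
  set tailC := 2 * M * Real.exp (-r ^ 2 / (16 * s)) * (c / Real.sqrt s) with htailC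
  have htailC0 : 0 ≤ tailC := by positivity
  have hptwise : ∀ y, ‖(u0 y - u0 x) • gradKernel n s (x - y)‖ ≤
      ε' * ‖gradKernel n s (x - y)‖ + tailC * Real.exp (-‖x - y‖ ^ 2 / (16 * s)) := by
    intro y
    rw [norm_smul (u0 y - u0 x) (gradKernel n s (x - y)), Real.norm_eq_abs]
    by_cases hy : ‖x - y‖ ≤ r
    · have hdist : dist y x < δ₀ := by
        rw [dist_eq_norm, norm_sub_rev]
        calc ‖x - y‖ ≤ r := hy
          _ < δ₀ := by rw [hrdef]; linarith
      have h1 : |u0 y - u0 x| ≤ ε' := by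
        have := hmod hdist
        rw [Real.dist_eq] at this
        exact this.le
      have h2 : |u0 y - u0 x| * ‖gradKernel n s (x - y)‖ ≤ ε' * ‖gradKernel n s (x - y)‖ :=
        mul_le_mul_of_nonneg_right h1 (norm_nonneg _)
      have h3 : 0 ≤ tailC * Real.exp (-‖x - y‖ ^ 2 / (16 * s)) := by positivity
      linarith
    · push_neg at hy
      have h1 : |u0 y - u0 x| ≤ 2 * M := by
        calc |u0 y - u0 x| ≤ |u0 y| + |u0 x| := abs_sub _ _
          _ ≤ 2 * M := by linarith [hb y, hb x]
      have h2 : ‖gradKernel n s (x - y)‖ ≤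
          c / Real.sqrt s * (Real.exp (-r ^ 2 / (16 * s)) * Real.exp (-‖x - y‖ ^ 2 / (16 * s))) := by
        refine (norm_gradKernel_le hs _).trans ?_
        exact mul_le_mul_of_nonneg_left (exp_tail_bound hs hr.le hy.le) (by positivity)
      have h3 : |u0 y - u0 x| * ‖gradKernel n s (x - y)‖ ≤
          tailC * Real.exp (-‖x - y‖ ^ 2 / (16 * s)) := by
        calc |u0 y - u0 x| * ‖gradKernel n s (x - y)‖
            ≤ (2 * M) * (c / Real.sqrt s *
              (Real.exp (-r ^ 2 / (16 * s)) * Real.exp (-‖x - y‖ ^ 2 / (16 * s)))) :=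
              mul_le_mul h1 h2 (norm_nonneg _) (by positivity)
          _ = tailC * Real.exp (-‖x - y‖ ^ 2 / (16 * s)) := by rw [htailC]; ring
      have h4 : 0 ≤ ε' * ‖gradKernel n s (x - y)‖ := by positivity
      linarith
  have hbint : Integrable (fun y => ε' * ‖gradKernel n s (x - y)‖
      + tailC * Real.exp (-‖x - y‖ ^ 2 / (16 * s))) :=
    ((integrable_comp_sub (integrable_norm_gradKernel hs) x).const_mul ε').add
      ((integrable_comp_sub (gauss_integrable h16) x).const_mul tailC)
  have hDle : ‖∫ y, (u0 y - u0 x) • gradKernel n s (x - y)‖ ≤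
      ∫ y, (ε' * ‖gradKernel n s (x - y)‖ + tailC * Real.exp (-‖x - y‖ ^ 2 / (16 * s))) :=
    norm_integral_le_of_norm_le hbint (Filter.Eventually.of_forall hptwise)
  have hsplit : (∫ y, (ε' * ‖gradKernel n s (x - y)‖
        + tailC * Real.exp (-‖x - y‖ ^ 2 / (16 * s))))
      = ε' * (∫ z, ‖gradKernel n s z‖) + tailC * (Real.pi * (16 * s)) ^ ((n:ℝ) / 2) := by
    rw [integral_add ((integrable_comp_sub (integrable_norm_gradKernel hs) x).const_mul ε')
      ((integrable_comp_sub (gauss_integrable h16) x).const_mul tailC),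
      integral_const_mul, integral_const_mul,
      integral_comp_sub (fun z => ‖gradKernel n s z‖) x,
      integral_comp_sub (fun z => Real.exp (-‖z‖ ^ 2 / (16 * s))) x, gauss_integral h16]
  have hnormint : (∫ z : EuclideanSpace ℝ (Fin n), ‖gradKernel n s z‖)
      ≤ c / Real.sqrt s * (Real.pi * (8 * s)) ^ ((n:ℝ) / 2) := by
    calc (∫ z : EuclideanSpace ℝ (Fin n), ‖gradKernel n s z‖)
        ≤ ∫ z : EuclideanSpace ℝ (Fin n), c / Real.sqrt s * Real.exp (-‖z‖ ^ 2 / (8 * s)) :=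
          integral_mono (integrable_norm_gradKernel hs)
            ((gauss_integrable h8).const_mul _) (fun z => norm_gradKernel_le hs z)
      _ = c / Real.sqrt s * (Real.pi * (8 * s)) ^ ((n:ℝ) / 2) := by
          rw [integral_const_mul, gauss_integral h8]
  have hc8 : c * (Real.pi * (8 * s)) ^ ((n:ℝ) / 2) = T := by
    rw [hcdef, hT, const_mul_rpow hs (by norm_num : (0:ℝ) < 8)]
    norm_num
  have hc16 : c * (Real.pi * (16 * s)) ^ ((n:ℝ) / 2) = C4 := by
    rw [hcdef, hC4, const_mul_rpow hs (by norm_num : (0:ℝ) < 16)]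
    norm_num
  have hcanc : Real.sqrt s * (c / Real.sqrt s) = c := by field_simp
  have hfinal : Real.sqrt s * ‖∫ y, (u0 y - u0 x) • gradKernel n s (x - y)‖ ≤
      ε' * T + C * Real.exp (-r ^ 2 / (16 * s)) := by
    have step1 : Real.sqrt s * ‖∫ y, (u0 y - u0 x) • gradKernel n s (x - y)‖ ≤
        Real.sqrt s * (ε' * (c / Real.sqrt s * (Real.pi * (8 * s)) ^ ((n:ℝ) / 2))
          + tailC * (Real.pi * (16 * s)) ^ ((n:ℝ) / 2)) := by
      refine mul_le_mul_of_nonneg_left ?_ ht.le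
      refine hDle.trans ?_
      rw [hsplit]
      have := mul_le_mul_of_nonneg_left hnormint hε'.le
      linarith
    refine step1.trans (le_of_eq ?_)
    rw [htailC]
    calc Real.sqrt s * (ε' * (c / Real.sqrt s * (Real.pi * (8 * s)) ^ ((n:ℝ) / 2))
          + 2 * M * Real.exp (-r ^ 2 / (16 * s)) * (c / Real.sqrt s)
            * (Real.pi * (16 * s)) ^ ((n:ℝ) / 2))
        = ε' * (Real.sqrt s * (c / Real.sqrt s)) * (Real.pi * (8 * s)) ^ ((n:ℝ) / 2)
          + 2 * M * Real.exp (-r ^ 2 / (16 * s)) * (Real.sqrt s * (c / Real.sqrt s))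
            * (Real.pi * (16 * s)) ^ ((n:ℝ) / 2) := by ring
      _ = ε' * T + C * Real.exp (-r ^ 2 / (16 * s)) := by
          rw [hcanc, hCdef]
          rw [mul_assoc ε' c, hc8]
          rw [show 2 * M * Real.exp (-r ^ 2 / (16 * s)) * c * (Real.pi * (16 * s)) ^ ((n:ℝ) / 2)
              = 2 * M * Real.exp (-r ^ 2 / (16 * s)) * (c * (Real.pi * (16 * s)) ^ ((n:ℝ) / 2))
            from by ring, hc16]
          ring
  refine hfinal.trans ?_
  have hεT : ε' * T = ε / 2 := by
    rw [hε'def]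
    field_simp
  have htail : C * Real.exp (-r ^ 2 / (16 * s)) ≤ ε / 2 := by
    have hx0 : 0 < r ^ 2 / (16 * s) := by positivity
    have hexp : Real.exp (-r ^ 2 / (16 * s)) ≤ 16 * s / r ^ 2 := by
      rw [neg_div, Real.exp_neg]
      have h1 : r ^ 2 / (16 * s) ≤ Real.exp (r ^ 2 / (16 * s)) := by
        have := Real.add_one_le_exp (r ^ 2 / (16 * s))
        linarith
      calc (Real.exp (r ^ 2 / (16 * s)))⁻¹ ≤ (r ^ 2 / (16 * s))⁻¹ :=
            inv_anti₀ hx0 h1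
        _ = 16 * s / r ^ 2 := by rw [inv_div]
    have h32 : s * (32 * (C + 1)) ≤ ε * r ^ 2 :=
      (le_div_iff₀ (by positivity)).mp hsδ
    calc C * Real.exp (-r ^ 2 / (16 * s)) ≤ C * (16 * s / r ^ 2) :=
          mul_le_mul_of_nonneg_left hexp hC0
      _ ≤ ε / 2 := by
          rw [mul_div_assoc', div_le_iff₀ (by positivity : (0:ℝ) < r ^ 2)]
          nlinarith [hs.le, hC0]
  linarith
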